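/- arXiv:2604.28096 — 3 statements merged into one kernel-verified Lean document; each statement's English description precedes it below -/
import Mathlib

section
/- Let G be the complete graph on 2k vertices minus a perfect matching {u_i, v_i}, i ∈ [k], with k = 2^t. Then G admits a composition-minimal clique cover with exactly 2 + 2t cliques, namely U = {u_1,...,u_k}, V = {v_1,...,v_k}, and for each bit position p ∈ [t] the cliques A_p = {u_i : bit p of i is 0} ∪ {v_i : bit p of i is 1} and B_p = {u_i : bit p of i is 1} ∪ {v_i : bit p of i is 0}. -/
/-- The complete graph on vertices `u_1,…,u_k, v_1,…,v_k` minus the perfect matching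
`{u_i, v_i}`: vertex `(b, i)` is `u_i` when `b = false` and `v_i` when `b = true`,
and two vertices are adjacent iff their indices differ. -/
def matchMinusGraph (k : ℕ) : SimpleGraph (Bool × Fin k) where
  Adj x y := x.2 ≠ y.2
  symm := ⟨fun _ _ h => Ne.symm h⟩
  loopless := ⟨fun _ h => h rfl⟩

/-- `𝒞` is a clique cover of `G`. -/
def IsCliqueCover {V : Type*} (G : SimpleGraph V) (𝒞 : Finset (Finset V)) : Prop :=
  (∀ C ∈ 𝒞, G.IsClique (C : Set V)) ∧
  ∀ u v : V, G.Adj u v → ∃ C ∈ 𝒞, u ∈ C ∧ v ∈ C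

/-- `𝒞` is composition-minimal: every pair of distinct cliques of `𝒞` admits a
witnessing non-edge between them. -/
def CompositionMinimal {V : Type*} (G : SimpleGraph V) (𝒞 : Finset (Finset V)) : Prop :=
  ∀ C ∈ 𝒞, ∀ D ∈ 𝒞, C ≠ D →
    ∃ u ∈ C, ∃ v ∈ D, u ≠ v ∧ ¬ G.Adj u v


section aux

variable {k : ℕ}

def bimg (k : ℕ) (f : Fin k → Bool) : Finset (Bool × Fin k) :=
  Finset.univ.image (fun i : Fin k => (f i, i))

lemma mem_bimg {f : Fin k → Bool} {b : Bool} {i : Fin k} :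
    (b, i) ∈ bimg k f ↔ b = f i := by
  simp only [bimg, Finset.mem_image, Finset.mem_univ, true_and, Prod.mk.injEq]
  constructor
  · rintro ⟨j, hb, rfl⟩; exact hb.symm
  · rintro rfl; exact ⟨i, rfl, rfl⟩

lemma bimg_inj {f g : Fin k → Bool} (h : bimg k f = bimg k g) : f = g := by
  funext i
  have : (f i, i) ∈ bimg k g := h ▸ mem_bimg.mpr rfl
  exact mem_bimg.mp this

lemma bimg_ne {f g : Fin k → Bool} (i : Fin k) (h : f i ≠ g i) :
    bimg k f ≠ bimg k g := fun he => h (congrFun (bimg_inj he) i)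

lemma bimg_clique (f : Fin k → Bool) :
    (matchMinusGraph k).IsClique (bimg k f : Set (Bool × Fin k)) := by
  rintro ⟨b, i⟩ hb ⟨c, j⟩ hc hne
  simp only [Finset.coe_image, bimg] at hb hc
  show i ≠ j
  rintro rfl
  simp only [Finset.coe_image, Set.mem_image] at hb hc
  obtain ⟨x, -, hx⟩ := hb
  obtain ⟨y, -, hy⟩ := hc
  obtain ⟨hx1, rfl⟩ := Prod.mk.injEq .. ▸ hx
  obtain ⟨hy1, h2⟩ := Prod.mk.injEq .. ▸ hy
  exact hne (by rw [← hx1, ← hy1, h2])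

end aux

/-- For `k = 2^t`, the graph `K_{2k}` minus a perfect matching admits a
composition-minimal clique cover with exactly `2 + 2t` cliques, namely
`U = {u_i}`, `V = {v_i}`, and for each bit position `p < t` the cliques
`A_p = {u_i : bit p of i = 0} ∪ {v_i : bit p of i = 1}` and
`B_p = {u_i : bit p of i = 1} ∪ {v_i : bit p of i = 0}`. -/
theorem logarithmic_compositionMinimal_cover (t : ℕ) :
    let k := 2 ^ t
    let G := matchMinusGraph k
    let U : Finset (Bool × Fin k) := Finset.univ.image (fun i : Fin k => (false, i))
    let W : Finset (Bool × Fin k) := Finset.univ.image (fun i : Fin k => (true, i))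
    let A : ℕ → Finset (Bool × Fin k) :=
      fun p => Finset.univ.image (fun i : Fin k => ((i : ℕ).testBit p, i))
    let B : ℕ → Finset (Bool × Fin k) :=
      fun p => Finset.univ.image (fun i : Fin k => (!(i : ℕ).testBit p, i))
    let 𝒞 : Finset (Finset (Bool × Fin k)) :=
      insert U (insert W ((Finset.range t).image A ∪ (Finset.range t).image B))
    IsCliqueCover G 𝒞 ∧ CompositionMinimal G 𝒞 ∧ 𝒞.card = 2 + 2 * t := by
  intro k G U W A B 𝒞
  have hk : 0 < k := Nat.pow_pos (by norm_num)
  -- members of 𝒞 are of the form `bimg`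
  have hU : U = bimg k (fun _ => false) := rfl
  have hW : W = bimg k (fun _ => true) := rfl
  have hA : ∀ p, A p = bimg k (fun i => (i : ℕ).testBit p) := fun _ => rfl
  have hB : ∀ p, B p = bimg k (fun i => !(i : ℕ).testBit p) := fun _ => rfl
  have hform : ∀ C ∈ 𝒞, ∃ f : Fin k → Bool, C = bimg k f := by
    intro C hC
    simp only [𝒞, Finset.mem_insert, Finset.mem_union, Finset.mem_image,
      Finset.mem_range] at hC
    rcases hC with rfl | rfl | ⟨p, -, rfl⟩ | ⟨p, -, rfl⟩
    · exact ⟨_, hU⟩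
    · exact ⟨_, hW⟩
    · exact ⟨_, hA p⟩
    · exact ⟨_, hB p⟩
  -- the element 2^p of Fin k, for p < t
  have pow_lt : ∀ p < t, 2 ^ p < k := fun p hp =>
    Nat.pow_lt_pow_right (by norm_num) hp
  refine ⟨⟨?_, ?_⟩, ?_, ?_⟩
  · intro C hC
    obtain ⟨f, rfl⟩ := hform C hC
    exact bimg_clique f
  · rintro ⟨b, i⟩ ⟨c, j⟩ hadj
    have hij : i ≠ j := hadj
    have hijn : (i : ℕ) ≠ (j : ℕ) := fun h => hij (Fin.ext h)
    -- a bit position where i and j differ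
    have hbit : ∃ p < t, (i : ℕ).testBit p ≠ (j : ℕ).testBit p := by
      by_contra hc
      push_neg at hc
      refine hijn (Nat.eq_of_testBit_eq fun p => ?_)
      by_cases hp : p < t
      · exact hc p hp
      · rw [Nat.testBit_lt_two_pow (lt_of_lt_of_le i.isLt (Nat.pow_le_pow_right (by norm_num) (le_of_not_gt hp))),
          Nat.testBit_lt_two_pow (lt_of_lt_of_le j.isLt (Nat.pow_le_pow_right (by norm_num) (le_of_not_gt hp)))]
    have hUm : U ∈ 𝒞 := Finset.mem_insert_self _ _
    have hWm : W ∈ 𝒞 := Finset.mem_insert_of_mem (Finset.mem_insert_self _ _)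
    have hAm : ∀ p < t, A p ∈ 𝒞 := fun p hp =>
      Finset.mem_insert_of_mem (Finset.mem_insert_of_mem
        (Finset.mem_union_left _ (Finset.mem_image_of_mem _ (Finset.mem_range.mpr hp))))
    have hBm : ∀ p < t, B p ∈ 𝒞 := fun p hp =>
      Finset.mem_insert_of_mem (Finset.mem_insert_of_mem
        (Finset.mem_union_right _ (Finset.mem_image_of_mem _ (Finset.mem_range.mpr hp))))
    obtain ⟨p, hpt, hpd⟩ := hbit
    have hj : (j : ℕ).testBit p = !(i : ℕ).testBit p := by
      cases h1 : (i : ℕ).testBit p <;> cases h2 : (j : ℕ).testBit p <;> simp_all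
    match b, c with
    | false, false =>
      exact ⟨U, hUm, hU ▸ mem_bimg.mpr rfl, hU ▸ mem_bimg.mpr rfl⟩
    | true, true =>
      exact ⟨W, hWm, hW ▸ mem_bimg.mpr rfl, hW ▸ mem_bimg.mpr rfl⟩
    | false, true =>
      cases h : (i : ℕ).testBit p
      · exact ⟨A p, hAm p hpt, hA p ▸ mem_bimg.mpr h.symm,
          hA p ▸ mem_bimg.mpr (by simp [hj, h])⟩
      · exact ⟨B p, hBm p hpt, hB p ▸ mem_bimg.mpr (by simp [h]),
          hB p ▸ mem_bimg.mpr (by simp [hj, h])⟩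
    | true, false =>
      cases h : (i : ℕ).testBit p
      · exact ⟨B p, hBm p hpt, hB p ▸ mem_bimg.mpr (by simp [h]),
          hB p ▸ mem_bimg.mpr (by simp [hj, h])⟩
      · exact ⟨A p, hAm p hpt, hA p ▸ mem_bimg.mpr h.symm,
          hA p ▸ mem_bimg.mpr (by simp [hj, h])⟩
  · -- composition minimal
    intro C hC D hD hne
    obtain ⟨f, rfl⟩ := hform C hC
    obtain ⟨g, rfl⟩ := hform D hD
    have : ∃ i, f i ≠ g i := by
      by_contra hc
      push_neg at hc
      exact hne (congrArg (bimg k) (funext hc))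
    obtain ⟨i, hi⟩ := this
    refine ⟨(f i, i), mem_bimg.mpr rfl, (g i, i), mem_bimg.mpr rfl, ?_, ?_⟩
    · exact fun h => hi (congrArg Prod.fst h)
    · exact fun h => (h : i ≠ i) rfl
  · -- cardinality
    have i0 : Fin k := ⟨0, hk⟩
    have key : ∀ (f g : Fin k → Bool) (i : Fin k), f i ≠ g i →
        Finset.univ.image (fun j : Fin k => (f j, j)) ≠
        Finset.univ.image (fun j : Fin k => (g j, j)) := fun f g i h => bimg_ne i h
    have hAinj : Set.InjOn A (Finset.range t) := by
      intro p hp q hq hpq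
      by_contra hne
      have hlt := pow_lt p (Finset.mem_range.mp hp)
      refine key _ _ (⟨2 ^ p, hlt⟩ : Fin k) ?_ hpq
      show (2 ^ p : ℕ).testBit p ≠ (2 ^ p : ℕ).testBit q
      rw [Nat.testBit_two_pow_self, Nat.testBit_two_pow_of_ne hne]
      simp
    have hBinj : Set.InjOn B (Finset.range t) := by
      intro p hp q hq hpq
      by_contra hne
      have hlt := pow_lt p (Finset.mem_range.mp hp)
      refine key _ _ (⟨2 ^ p, hlt⟩ : Fin k) ?_ hpq
      show (!(2 ^ p : ℕ).testBit p) ≠ !(2 ^ p : ℕ).testBit q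
      simp [Nat.testBit_two_pow_self, Nat.testBit_two_pow_of_ne hne]
    have hAB : ∀ p q : ℕ, A p ≠ B q := by
      intro p q
      refine key _ _ (⟨0, hk⟩ : Fin k) ?_
      show ((0 : ℕ)).testBit p ≠ !((0 : ℕ)).testBit q
      simp
    have hUA : ∀ p < t, U ≠ A p := by
      intro p hpt
      refine key _ _ (⟨2 ^ p, pow_lt p hpt⟩ : Fin k) ?_
      show false ≠ (2 ^ p : ℕ).testBit p
      simp [Nat.testBit_two_pow_self]
    have hUB : ∀ p, U ≠ B p := by
      intro p
      refine key _ _ (⟨0, hk⟩ : Fin k) ?_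
      show false ≠ !((0 : ℕ)).testBit p
      simp
    have hWA : ∀ p, W ≠ A p := by
      intro p
      refine key _ _ (⟨0, hk⟩ : Fin k) ?_
      show true ≠ ((0 : ℕ)).testBit p
      simp
    have hWB : ∀ p < t, W ≠ B p := by
      intro p hpt
      refine key _ _ (⟨2 ^ p, pow_lt p hpt⟩ : Fin k) ?_
      show true ≠ (!(2 ^ p : ℕ).testBit p)
      simp [Nat.testBit_two_pow_self]
    have hUW : U ≠ W := key _ _ (⟨0, hk⟩ : Fin k) (by simp)
    have hdisj : Disjoint ((Finset.range t).image A) ((Finset.range t).image B) := by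
      rw [Finset.disjoint_left]
      rintro x hx hy
      obtain ⟨p, hp, rfl⟩ := Finset.mem_image.mp hx
      obtain ⟨q, hq, he⟩ := Finset.mem_image.mp hy
      exact hAB p q he.symm
    have hUAB : U ∉ (Finset.range t).image A ∪ (Finset.range t).image B := by
      rw [Finset.mem_union]
      rintro (h | h) <;> obtain ⟨p, hp, he⟩ := Finset.mem_image.mp h
      · exact hUA p (Finset.mem_range.mp hp) he.symm
      · exact hUB p he.symm
    have hWAB : W ∉ (Finset.range t).image A ∪ (Finset.range t).image B := by
      rw [Finset.mem_union]
      rintro (h | h) <;> obtain ⟨p, hp, he⟩ := Finset.mem_image.mp h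
      · exact hWA p he.symm
      · exact hWB p (Finset.mem_range.mp hp) he.symm
    have hUin : U ∉ insert W ((Finset.range t).image A ∪ (Finset.range t).image B) := by
      rw [Finset.mem_insert]
      rintro (h | h)
      · exact hUW h
      · exact hUAB h
    rw [show 𝒞 = insert U (insert W ((Finset.range t).image A ∪ (Finset.range t).image B)) from rfl,
      Finset.card_insert_of_notMem hUin, Finset.card_insert_of_notMem hWAB,
      Finset.card_union_of_disjoint hdisj,
      Finset.card_image_of_injOn hAinj, Finset.card_image_of_injOn hBinj,
      Finset.card_range]
    ring
end

section
/- Let G be a graph with σ − 1 non-edges. In any first-fit greedy coloring of the complement of G with color classes F_1, ..., F_p, the number q of color classes of size at least 2 satisfies q(q−1) ≤ σ − 1; in particular q = O(√σ). -/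
lemma tri_le_sum (S : Finset ℕ) : ∑ i ∈ Finset.range S.card, i ≤ ∑ k ∈ S, k := by
  induction S using Finset.strongInduction with
  | _ S ih =>
    rcases S.eq_empty_or_nonempty with rfl | hne
    · simp
    · set M := S.max' hne with hMdef
      have hM := S.max'_mem hne
      have hcard : S.card ≤ M + 1 := by
        have hsub : S ⊆ Finset.range (M + 1) := fun x hx =>
          Finset.mem_range.mpr (Nat.lt_succ_of_le (S.le_max' x hx))
        simpa using Finset.card_le_card hsub
      have hpos : 0 < S.card := Finset.card_pos.mpr hne
      have h1 : S.card = (S.erase M).card + 1 := by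
        rw [Finset.card_erase_of_mem hM]; omega
      have h2 : (S.erase M).card ≤ M := by omega
      have ih' := ih (S.erase M) (Finset.erase_ssubset hM)
      have h3 : ∑ k ∈ S, k = M + ∑ k ∈ S.erase M, k :=
        (Finset.add_sum_erase S id hM).symm
      rw [h1, Finset.sum_range_succ, h3]
      omega

lemma sum_colors_le {V : Type*} [Fintype V] [DecidableEq V]
    (G : SimpleGraph V) [DecidableRel G.Adj]
    (ord : V → ℕ) (c : V → ℕ)
    (hgreedy : ∀ v : V, ∀ ℓ < c v, ∃ u : V, ord u < ord v ∧ c u = ℓ ∧ Gᶜ.Adj u v) :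
    ∑ v : V, c v ≤ Gᶜ.edgeFinset.card := by
  classical
  set T : Finset ((_ : V) × ℕ) := Finset.univ.sigma (fun v => Finset.range (c v)) with hT
  have hcardT : T.card = ∑ v : V, c v := by simp [hT, Finset.card_sigma]
  rw [← hcardT]
  set w : V → ℕ → V := fun v ℓ =>
    if h : ∃ u : V, ord u < ord v ∧ c u = ℓ ∧ Gᶜ.Adj u v then h.choose else v with hw
  have hwspec : ∀ v ℓ, ℓ < c v → ord (w v ℓ) < ord v ∧ c (w v ℓ) = ℓ ∧ Gᶜ.Adj (w v ℓ) v := by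
    intro v ℓ hℓ
    have h := hgreedy v ℓ hℓ
    simp only [hw, dif_pos h]
    exact h.choose_spec
  apply Finset.card_le_card_of_injOn (fun x => s(w x.1 x.2, x.1))
  · rintro ⟨v, ℓ⟩ hx
    simp only [hT, Finset.mem_coe, Finset.mem_sigma, Finset.mem_univ, Finset.mem_range, true_and] at hx
    exact SimpleGraph.mem_edgeFinset.mpr ((hwspec v ℓ hx).2.2)
  · rintro ⟨v₁, ℓ₁⟩ h₁ ⟨v₂, ℓ₂⟩ h₂ heq
    simp only [hT, Finset.mem_coe, Finset.mem_sigma, Finset.mem_univ, Finset.mem_range,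
      true_and] at h₁ h₂
    dsimp only at heq ⊢
    obtain ⟨ho₁, hc₁, -⟩ := hwspec v₁ ℓ₁ h₁
    obtain ⟨ho₂, hc₂, -⟩ := hwspec v₂ ℓ₂ h₂
    rw [Sym2.eq_iff] at heq
    rcases heq with ⟨hww, rfl⟩ | ⟨h1, h2⟩
    · simp only [Sigma.mk.inj_iff, heq_eq_eq, true_and]
      rw [← hc₁, ← hc₂, hww]
    · exfalso; rw [h1] at ho₁; rw [← h2] at ho₂; omega

lemma compl_card_eq {V : Type*} [Fintype V] [DecidableEq V]
    (G : SimpleGraph V) [DecidableRel G.Adj] :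
    G.edgeFinset.card + Gᶜ.edgeFinset.card = (Fintype.card V).choose 2 := by
  classical
  rw [← SimpleGraph.card_edgeFinset_top_eq_card_choose_two]
  rw [← Finset.card_union_of_disjoint
    (SimpleGraph.disjoint_edgeFinset.mpr disjoint_compl_right),
    ← SimpleGraph.edgeFinset_sup]
  congr 1
  ext e
  simp [SimpleGraph.edgeFinset, sup_compl_eq_top]

/-- Let `G` have `σ - 1` non-edges, where `σ = C(n,2) - m + 1`.  In any first-fit
greedy coloring of the complement of `G` (0-indexed coloring `c`, proper on `Gᶜ`,
with each smaller color blocked by an earlier complement-neighbor), the number `q`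
of color classes of size at least `2` satisfies `q(q-1) ≤ σ - 1`. -/
theorem firstFit_big_classes_bound
    {V : Type*} [Fintype V] [DecidableEq V]
    (G : SimpleGraph V) [DecidableRel G.Adj]
    (n m σ : ℕ)
    (hn : n = Fintype.card V)
    (hm : m = G.edgeFinset.card)
    (hσ : σ = n.choose 2 - m + 1)
    (ord : V → ℕ) (hord : Function.Injective ord)
    (c : V → ℕ)
    (hproper : ∀ u v : V, Gᶜ.Adj u v → c u ≠ c v)
    (hgreedy : ∀ v : V, ∀ ℓ < c v, ∃ u : V, ord u < ord v ∧ c u = ℓ ∧ Gᶜ.Adj u v)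
    (p : ℕ) (hp : ∀ v : V, c v < p)
    (q : ℕ)
    (hq : q = ((Finset.range p).filter
        (fun k => 2 ≤ (Finset.univ.filter (fun v : V => c v = k)).card)).card) :
    q * (q - 1) ≤ σ - 1 := by
  classical
  set S := ((Finset.range p).filter
      (fun k => 2 ≤ (Finset.univ.filter (fun v : V => c v = k)).card)) with hS
  -- group the sum of colors by color class
  have hfiber : ∑ k ∈ Finset.range p,
      ∑ v ∈ Finset.univ.filter (fun v : V => c v = k), c v = ∑ v : V, c v :=
    Finset.sum_fiberwise_of_maps_to (fun v _ => Finset.mem_range.mpr (hp v)) c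
  have hinner : ∀ k, ∑ v ∈ Finset.univ.filter (fun v : V => c v = k), c v
      = k * (Finset.univ.filter (fun v : V => c v = k)).card := by
    intro k
    rw [Finset.sum_congr rfl (fun v hv => (Finset.mem_filter.mp hv).2),
      Finset.sum_const, smul_eq_mul, mul_comm]
  -- lower bound: q(q-1) ≤ ∑ v, c v
  have hlow : q * (q - 1) ≤ ∑ v : V, c v := by
    have h1 : (∑ i ∈ Finset.range q, i) * 2 = q * (q - 1) := Finset.sum_range_id_mul_two q
    have h2 : ∑ i ∈ Finset.range q, i ≤ ∑ k ∈ S, k := by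
      rw [hq]; exact tri_le_sum S
    have h3 : ∑ k ∈ S, 2 * k ≤ ∑ k ∈ S,
        k * (Finset.univ.filter (fun v : V => c v = k)).card := by
      apply Finset.sum_le_sum
      intro k hk
      have h2k := (Finset.mem_filter.mp hk).2
      calc 2 * k = k * 2 := mul_comm _ _
        _ ≤ _ := Nat.mul_le_mul_left k h2k
    have h4 : ∑ k ∈ S, k * (Finset.univ.filter (fun v : V => c v = k)).card
        ≤ ∑ k ∈ Finset.range p, k * (Finset.univ.filter (fun v : V => c v = k)).card :=
      Finset.sum_le_sum_of_subset (Finset.filter_subset _ _)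
    have h5 : ∑ k ∈ Finset.range p, k * (Finset.univ.filter (fun v : V => c v = k)).card
        = ∑ v : V, c v := by
      rw [← hfiber]; exact Finset.sum_congr rfl (fun k _ => (hinner k).symm)
    have h6 : ∑ k ∈ S, 2 * k = (∑ k ∈ S, k) * 2 := by
      rw [Finset.sum_mul]; exact Finset.sum_congr rfl (fun k _ => mul_comm 2 k)
    omega
  -- upper bound: ∑ v, c v ≤ σ - 1
  have hup : ∑ v : V, c v ≤ σ - 1 := by
    have h7 := sum_colors_le G ord c hgreedy
    have h8 := compl_card_eq G
    rw [← hn, ← hm] at h8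
    omega
  omega
end

section
/- Let G be a graph with degeneracy d and let H* be a subgraph of G maximizing the density ρ(H) = |E_H|/|V_H| over all (nonempty) subgraphs. Then any subgraph H' of G with minimum degree equal to d satisfies ρ(H') ≥ d/2 ≥ ρ(H*)/2; that is, a d-core of G is a 2-approximation to the densest subgraph. -/
open Set

/-- The density `|E_H| / |V_H|` of a subgraph. -/
noncomputable def subgraphDensity {V : Type*} {G : SimpleGraph V}
    (H : G.Subgraph) : ℝ :=
  (H.edgeSet.ncard : ℝ) / (H.verts.ncard : ℝ)

lemma edgeSet_ncard_coe {V : Type*} {G : SimpleGraph V} (H : G.Subgraph) :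
    H.coe.edgeSet.ncard = H.edgeSet.ncard := by
  rw [← H.image_coe_edgeSet_coe]
  exact (Set.ncard_image_of_injective _ (Sym2.map.injective Subtype.val_injective)).symm

lemma subgraph_handshake {V : Type*} [Fintype V] {G : SimpleGraph V} (H : G.Subgraph) :
    ∑ v ∈ H.verts.toFinite.toFinset, (H.neighborSet v).ncard = 2 * H.edgeSet.ncard := by
  classical
  haveI : Fintype H.verts := Fintype.ofFinite _
  haveI : DecidableRel H.coe.Adj := Classical.decRel _
  have h := H.coe.sum_degrees_eq_twice_card_edges
  have hdeg : ∀ (v : H.verts) (i1 : Fintype (H.coe.neighborSet v)),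
      @SimpleGraph.degree _ H.coe v i1 = (H.neighborSet (v : V)).ncard := by
    intro v i1
    have i2 : Fintype (H.neighborSet (v : V)) := Fintype.ofFinite _
    rw [@SimpleGraph.Subgraph.coe_degree _ _ H v i1 i2,
        ← @SimpleGraph.Subgraph.finset_card_neighborSet_eq_degree _ _ H v i2,
        @Set.toFinset_card _ _ i2, ← Nat.card_eq_fintype_card, Nat.card_coe_set_eq]
  have hsum : ∑ v : H.verts, (H.neighborSet (v : V)).ncard
      = ∑ v ∈ H.verts.toFinite.toFinset, (H.neighborSet v).ncard := by
    exact (Finset.sum_subtype _ (fun x => (Set.toFinite H.verts).mem_toFinset)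
      (fun v => (H.neighborSet v).ncard)).symm
  have hedge : H.coe.edgeFinset.card = H.edgeSet.ncard := by
    rw [SimpleGraph.edgeFinset_card, ← edgeSet_ncard_coe, ← Nat.card_coe_set_eq,
      Nat.card_eq_fintype_card]
  calc ∑ v ∈ H.verts.toFinite.toFinset, (H.neighborSet v).ncard
      = ∑ v : H.verts, (H.neighborSet (v : V)).ncard := hsum.symm
    _ = ∑ v : H.verts, @SimpleGraph.degree _ H.coe v (H.coe.neighborSetFintype v) :=
        Finset.sum_congr rfl (fun v _ => (hdeg v _).symm)
    _ = 2 * H.coe.edgeFinset.card := h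
    _ = 2 * H.edgeSet.ncard := by rw [hedge]

/-- Degeneracy bounds the number of edges of any subgraph. -/
lemma edge_bound {V : Type*} [Fintype V] {G : SimpleGraph V} (d : ℕ)
    (hd : ∀ H : G.Subgraph, H.verts.Nonempty →
      ∃ v ∈ H.verts, (H.neighborSet v).ncard ≤ d) :
    ∀ n : ℕ, ∀ H : G.Subgraph, H.verts.ncard ≤ n → H.edgeSet.ncard ≤ d * H.verts.ncard := by
  intro n
  induction n with
  | zero =>
    intro H hn
    have hfin : H.verts.Finite := Set.toFinite _
    have : H.verts = ∅ := by
      rw [← Set.ncard_eq_zero hfin]; omega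
    have he : H.edgeSet = ∅ := by
      ext e
      simp only [Set.mem_empty_iff_false, iff_false]
      intro hx
      induction e with
      | h a b =>
        exact absurd (H.edge_vert hx) (by simp [this])
    simp [he]
  | succ n ih =>
    intro H hn
    rcases Set.eq_empty_or_nonempty H.verts with he | hne
    · have : H.edgeSet = ∅ := by
        ext e
        simp only [Set.mem_empty_iff_false, iff_false]
        intro hx
        induction e with
        | h a b => exact absurd (H.edge_vert hx) (by simp [he])
      simp [this]
    obtain ⟨v, hv, hdv⟩ := hd H hne
    set H₂ := H.deleteVerts {v} with hH₂
    have hverts : H₂.verts = H.verts \ {v} := rfl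
    have hcard : H₂.verts.ncard = H.verts.ncard - 1 := by
      rw [hverts, Set.ncard_diff_singleton_of_mem hv]
    have hpos : 1 ≤ H.verts.ncard := (Set.ncard_pos (Set.toFinite _)).mpr hne
    have hsub : H.edgeSet ⊆ H₂.edgeSet ∪ (fun w => s(v, w)) '' (H.neighborSet v) := by
      intro e he'
      induction e with
      | h a b =>
        rw [SimpleGraph.Subgraph.mem_edgeSet] at he'
        by_cases hva : v = a
        · right; exact ⟨b, by rwa [← hva] at he', by rw [hva]⟩
        by_cases hvb : v = b
        · right; exact ⟨a, by rw [← hvb] at he'; exact he'.symm, by rw [hvb, Sym2.eq_swap]⟩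
        · left
          rw [SimpleGraph.Subgraph.mem_edgeSet, SimpleGraph.Subgraph.deleteVerts_adj]
          exact ⟨he'.fst_mem, by simpa using Ne.symm hva, he'.snd_mem,
            by simpa using Ne.symm hvb, he'⟩
    have himg : ((fun w => s(v, w)) '' (H.neighborSet v)).ncard ≤ d :=
      le_trans (Set.ncard_image_le (Set.toFinite _)) hdv
    have h2 : H₂.edgeSet.ncard ≤ d * H₂.verts.ncard := by
      apply ih; rw [hcard]; omega
    calc H.edgeSet.ncard ≤ (H₂.edgeSet ∪ (fun w => s(v, w)) '' (H.neighborSet v)).ncard :=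
          Set.ncard_le_ncard hsub (Set.toFinite _)
      _ ≤ H₂.edgeSet.ncard + ((fun w => s(v, w)) '' (H.neighborSet v)).ncard :=
          Set.ncard_union_le _ _
      _ ≤ d * H₂.verts.ncard + d := by omega
      _ ≤ d * H.verts.ncard := by
          rw [hcard, ← Nat.mul_succ, Nat.succ_eq_add_one, Nat.sub_add_cancel hpos]

/-- Let `G` have degeneracy `d` (every nonempty subgraph has a vertex of degree at
most `d`) and let `Hs` be a densest subgraph of `G`.  Then any subgraph `H'` of `G`
with minimum degree equal to `d` satisfies `ρ(H') ≥ d/2 ≥ ρ(Hs)/2`: a `d`-core is a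
2-approximation to the densest subgraph. -/
theorem dCore_two_approx_densest
    {V : Type*} [Fintype V] (G : SimpleGraph V) (d : ℕ)
    (hd : ∀ H : G.Subgraph, H.verts.Nonempty →
      ∃ v ∈ H.verts, (H.neighborSet v).ncard ≤ d)
    (Hs : G.Subgraph) (hHs : Hs.verts.Nonempty)
    (hmax : ∀ H : G.Subgraph, H.verts.Nonempty →
      subgraphDensity H ≤ subgraphDensity Hs)
    (H' : G.Subgraph) (hH' : H'.verts.Nonempty)
    (hmin : ∀ v ∈ H'.verts, d ≤ (H'.neighborSet v).ncard)
    (hminEq : ∃ v ∈ H'.verts, (H'.neighborSet v).ncard = d) :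
    (d : ℝ) / 2 ≤ subgraphDensity H' ∧
    subgraphDensity Hs / 2 ≤ (d : ℝ) / 2 := by
  classical
  constructor
  · have hsum := subgraph_handshake H'
    have hlow : d * H'.verts.ncard
        ≤ ∑ v ∈ H'.verts.toFinite.toFinset, (H'.neighborSet v).ncard := by
      calc d * H'.verts.ncard = ∑ _v ∈ H'.verts.toFinite.toFinset, d := by
            rw [Finset.sum_const, smul_eq_mul, Set.ncard_eq_toFinset_card, mul_comm]
        _ ≤ _ := Finset.sum_le_sum (fun v hv => hmin v (by simpa using hv))
    have key : d * H'.verts.ncard ≤ 2 * H'.edgeSet.ncard := by omega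
    have hvpos : (0 : ℝ) < (H'.verts.ncard : ℝ) := by
      exact_mod_cast (Set.ncard_pos (Set.toFinite _)).mpr hH'
    rw [subgraphDensity, div_le_div_iff₀ two_pos hvpos]
    have : (d : ℝ) * H'.verts.ncard ≤ 2 * H'.edgeSet.ncard := by exact_mod_cast key
    linarith
  · have hb := edge_bound d hd Hs.verts.ncard Hs le_rfl
    have hvpos : (0 : ℝ) < (Hs.verts.ncard : ℝ) := by
      exact_mod_cast (Set.ncard_pos (Set.toFinite _)).mpr hHs
    have : subgraphDensity Hs ≤ d := by
      rw [subgraphDensity, div_le_iff₀ hvpos]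
      exact_mod_cast hb
    linarith
end
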